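/- Let d ≥ 1, n ≥ 1, σ > 0, and let δ_1, …, δ_n ∈ ℝ^d with mean δ̄ = (1/n)·Σ_{v=1}^n δ_v. For each u let P_u = N(δ_u, σ²I) be the isotropic Gaussian measure on ℝ^d with mean δ_u, and let P̄ = (1/n)·Σ_{v=1}^n P_v. Then (1/n)·Σ_{u=1}^n KL(P_u ‖ P̄) ≤ (1/σ²) · (1/n) · Σ_{u=1}^n ‖δ_u − δ̄‖². -/

import Mathlib

open MeasureTheory ProbabilityTheory Real
open scoped ENNReal NNReal

namespace KLAux

lemma lintegral_pi_prod : ∀ {d : ℕ} (μ : Fin d → Measure ℝ) (_ : ∀ i, SigmaFinite (μ i))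
    (f : Fin d → ℝ → ℝ≥0∞) (_ : ∀ i, Measurable (f i)),
    ∫⁻ x : Fin d → ℝ, ∏ i, f i (x i) ∂Measure.pi μ = ∏ i, ∫⁻ y, f i y ∂μ i := by
  intro d
  induction d with
  | zero =>
    intro μ _ f _
    simp [lintegral_const, Measure.pi_empty_univ]
  | succ d ih =>
    intro μ hμ f hf
    have : ∀ i, SigmaFinite (μ i) := hμ
    have hmp := (measurePreserving_piFinSuccAbove μ 0).symm
    have hF : Measurable fun x : Fin (d + 1) → ℝ => ∏ i, f i (x i) :=
      Finset.measurable_prod _ fun i _ => (hf i).comp (measurable_pi_apply i)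
    rw [← hmp.lintegral_comp hF]
    have heq : ∀ y : ℝ × (Fin d → ℝ),
        (∏ i, f i (((MeasurableEquiv.piFinSuccAbove (fun _ => ℝ) 0).symm y) i))
          = f 0 y.1 * ∏ j : Fin d, f (Fin.succ j) (y.2 j) := by
      intro y
      simp only [MeasurableEquiv.piFinSuccAbove_symm_apply, Fin.insertNthEquiv,
        Fin.insertNth_zero, Equiv.coe_fn_mk, Fin.prod_univ_succ, Fin.cons_zero, Fin.cons_succ,
        Fin.zero_succAbove, cast_eq]
    simp_rw [heq]
    rw [lintegral_prod_mul (f := fun a => f 0 a)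
      (g := fun b : Fin d → ℝ => ∏ j, f (Fin.succ j) (b j)) (hf 0).aemeasurable
      (Finset.measurable_prod _ fun j _ =>
        ((hf _).comp (measurable_pi_apply j))).aemeasurable]
    simp_rw [Fin.zero_succAbove]
    rw [ih (fun j : Fin d => μ j.succ) (fun j => hμ _) (fun j => f (Fin.succ j)) (fun j => hf _)]
    rw [Fin.prod_univ_succ]

lemma pi_withDensity {d : ℕ} (μ : Fin d → Measure ℝ) [∀ i, SigmaFinite (μ i)]
    (f : Fin d → ℝ → ℝ≥0∞) (hf : ∀ i, Measurable (f i))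
    [∀ i, SigmaFinite ((μ i).withDensity (f i))] :
    Measure.pi (fun i => (μ i).withDensity (f i))
      = (Measure.pi μ).withDensity (fun x => ∏ i, f i (x i)) := by
  refine (Measure.pi_eq fun s hs => ?_)
  rw [withDensity_apply _ (MeasurableSet.univ_pi hs)]
  have : ∀ x : Fin d → ℝ, (Set.univ.pi s).indicator (fun x => ∏ i, f i (x i)) x
      = ∏ i, (s i).indicator (f i) (x i) := by
    intro x
    by_cases hx : x ∈ Set.univ.pi s
    · rw [Set.indicator_of_mem hx]
      exact (Finset.prod_congr rfl fun i _ =>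
        (Set.indicator_of_mem (hx i (Set.mem_univ i)) _).symm)
    · rw [Set.indicator_of_notMem hx]
      simp only [Set.mem_pi, Set.mem_univ, true_implies, not_forall] at hx
      obtain ⟨i, hi⟩ := hx
      exact (Finset.prod_eq_zero (Finset.mem_univ i)
        (by rw [Set.indicator_of_notMem hi])).symm
  rw [← lintegral_indicator (MeasurableSet.univ_pi hs)]
  simp_rw [this]
  rw [lintegral_pi_prod μ inferInstance _ (fun i => (hf i).indicator (hs i))]
  exact Finset.prod_congr rfl fun i _ => by
    rw [lintegral_indicator (hs i)]; exact (withDensity_apply _ (hs i)).symm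

lemma pi_map_eval {d : ℕ} (μ : Fin d → Measure ℝ) [∀ i, IsProbabilityMeasure (μ i)]
    (i : Fin d) :
    (Measure.pi μ).map (fun x => x i) = μ i := by
  ext s hs
  rw [Measure.map_apply (measurable_pi_apply i) hs]
  have : (fun x : Fin d → ℝ => x i) ⁻¹' s
      = Set.univ.pi (Function.update (fun _ => Set.univ) i s) := by
    rw [← Set.eval_preimage]
  rw [this, Measure.pi_pi]
  rw [Finset.prod_eq_single i (fun j _ hj => by
      rw [Function.update_of_ne hj]; exact measure_univ) (by simp)]
  simp

lemma integrable_eval_pi {d : ℕ} (μ : Fin d → Measure ℝ) [∀ i, IsProbabilityMeasure (μ i)]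
    (i : Fin d) (h : Integrable id (μ i)) :
    Integrable (fun x : Fin d → ℝ => x i) (Measure.pi μ) := by
  have hmap := pi_map_eval μ i
  have := (integrable_map_measure (f := fun x : Fin d → ℝ => x i) (g := id)
    (by rw [hmap]; exact h.aestronglyMeasurable) (measurable_pi_apply i).aemeasurable).mp
  rw [hmap] at this
  exact this h

lemma integral_eval_pi {d : ℕ} (μ : Fin d → Measure ℝ) [∀ i, IsProbabilityMeasure (μ i)]
    (i : Fin d) :
    ∫ x : Fin d → ℝ, x i ∂Measure.pi μ = ∫ y, y ∂μ i := by
  have hmap := pi_map_eval μ i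
  rw [← hmap]
  have h2 : AEStronglyMeasurable (fun y : ℝ => y) ((Measure.pi μ).map (fun x : Fin d → ℝ => x i)) := by
    rw [hmap]; exact aestronglyMeasurable_id
  exact (integral_map (φ := fun x : Fin d → ℝ => x i) (measurable_pi_apply i).aemeasurable h2).symm

lemma integrable_mul_gaussianPDFReal (m : ℝ) {v : ℝ≥0} (hv : v ≠ 0) :
    Integrable (fun x : ℝ => x * gaussianPDFReal m v x) := by
  have hb : (0:ℝ) < (2 * (v:ℝ))⁻¹ := by
    have : (0:ℝ) < (v:ℝ) := lt_of_le_of_ne (v.coe_nonneg) (by exact_mod_cast hv.symm)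
    positivity
  have h0 : Integrable (fun x : ℝ => (x + m) * gaussianPDFReal m v (x + m)) := by
    simp_rw [gaussianPDFReal, add_sub_cancel_right]
    have : ∀ x : ℝ, (x + m) * ((√(2 * π * v))⁻¹ * rexp (-x ^ 2 / (2 * v)))
        = (√(2 * π * v))⁻¹ * (x * rexp (-(2 * (v:ℝ))⁻¹ * x ^ 2))
          + m * ((√(2 * π * v))⁻¹ * rexp (-(2 * (v:ℝ))⁻¹ * x ^ 2)) := by
      intro x
      rw [neg_div, div_eq_inv_mul, neg_mul]
      ring
    simp_rw [this]
    exact (((integrable_mul_exp_neg_mul_sq hb).const_mul _).add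
      (((integrable_exp_neg_mul_sq hb).const_mul _).const_mul _))
  have := h0.comp_sub_right m
  simpa using this

lemma integrable_id_gaussianReal (m : ℝ) {v : ℝ≥0} (hv : v ≠ 0) :
    Integrable id (gaussianReal m v) := by
  rw [gaussianReal_of_var_ne_zero _ hv]
  have : gaussianPDF m v = fun x => ((gaussianPDFReal m v x).toNNReal : ℝ≥0∞) := rfl
  rw [this, integrable_withDensity_iff_integrable_smul
    (measurable_gaussianPDFReal m v).real_toNNReal]
  refine (integrable_mul_gaussianPDFReal m hv).congr (Filter.Eventually.of_forall fun x => ?_)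
  simp only [id_eq, NNReal.smul_def, smul_eq_mul]
  rw [Real.coe_toNNReal _ (gaussianPDFReal_nonneg m v x), mul_comm]

lemma integral_id_gaussianReal (m : ℝ) {v : ℝ≥0} (hv : v ≠ 0) :
    ∫ x, x ∂gaussianReal m v = m := by
  rw [gaussianReal_of_var_ne_zero _ hv]
  have h1 : gaussianPDF m v = fun x => ((gaussianPDFReal m v x).toNNReal : ℝ≥0∞) := rfl
  rw [h1, integral_withDensity_eq_integral_smul
    (measurable_gaussianPDFReal m v).real_toNNReal]
  have h2 : ∀ x : ℝ, (gaussianPDFReal m v x).toNNReal • x = x * gaussianPDFReal m v x := by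
    intro x
    simp only [NNReal.smul_def, smul_eq_mul]
    rw [Real.coe_toNNReal _ (gaussianPDFReal_nonneg m v x), mul_comm]
  simp_rw [h2]
  have hshift : ∫ x : ℝ, x * gaussianPDFReal m v x
      = ∫ x : ℝ, (x + m) * gaussianPDFReal m v (x + m) :=
    (integral_add_right_eq_self (fun x : ℝ => x * gaussianPDFReal m v x) m).symm
  rw [hshift]
  have hpdf : ∀ x : ℝ, gaussianPDFReal m v (x + m) = gaussianPDFReal 0 v x := by
    intro x
    rw [gaussianPDFReal_add, sub_self]
  simp_rw [hpdf, add_mul]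
  have hint0 : Integrable (fun x : ℝ => x * gaussianPDFReal 0 v x) :=
    integrable_mul_gaussianPDFReal 0 hv
  rw [integral_add hint0 ((integrable_gaussianPDFReal 0 v).const_mul m)]
  have hodd : ∫ x : ℝ, x * gaussianPDFReal 0 v x = 0 := by
    have hneg : ∀ x : ℝ, (-x) * gaussianPDFReal 0 v (-x) = -(x * gaussianPDFReal 0 v x) := by
      intro x
      have : gaussianPDFReal 0 v (-x) = gaussianPDFReal 0 v x := by
        simp [gaussianPDFReal, neg_sq]
      rw [this]; ring
    have := integral_neg_eq_self (fun x : ℝ => x * gaussianPDFReal 0 v x) (volume : Measure ℝ)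
    simp_rw [hneg, integral_neg] at this
    linarith
  rw [hodd, zero_add, integral_const_mul, integral_gaussianPDFReal_eq_one 0 hv, mul_one]

lemma withDensity_finset_sum {α ι : Type*} [MeasurableSpace α] (μ : Measure α) (s : Finset ι)
    (g : ι → α → ℝ≥0∞) (hg : ∀ v, Measurable (g v)) :
    ∑ v ∈ s, μ.withDensity (g v) = μ.withDensity (fun x => ∑ v ∈ s, g v x) := by
  classical
  induction s using Finset.induction_on with
  | empty => simp
  | insert _ _ hx ih =>
    rename_i a s
    rw [Finset.sum_insert hx]
    simp_rw [Finset.sum_insert hx]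
    rw [ih, ← withDensity_add_right _ (by
      exact Finset.measurable_sum _ fun v _ => hg v)]
    rfl

lemma map_toLp_withDensity {d : ℕ} (μ : Measure (Fin d → ℝ)) (g : (Fin d → ℝ) → ℝ≥0∞)
    (hg : Measurable g) :
    Measure.map (WithLp.toLp 2) (μ.withDensity g)
      = (Measure.map (WithLp.toLp 2) μ).withDensity
          (fun x : EuclideanSpace ℝ (Fin d) => g x.ofLp) := by
  ext s hs
  have hm : Measurable (WithLp.toLp 2 : (Fin d → ℝ) → EuclideanSpace ℝ (Fin d)) :=
    (MeasurableEquiv.toLp 2 (Fin d → ℝ)).measurable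
  rw [Measure.map_apply hm hs, withDensity_apply _ (hm hs), withDensity_apply _ hs,
    setLIntegral_map (f := fun x : EuclideanSpace ℝ (Fin d) => g x.ofLp) hs (hg.comp (MeasurableEquiv.toLp 2 (Fin d → ℝ)).symm.measurable) hm]

end KLAux


/-- The isotropic Gaussian measure `N(a, σ²I)` on `ℝ^d`, i.e. the product over the `d`
coordinates of one-dimensional Gaussian measures with means `a i` and common variance `σ²`. -/
noncomputable def gaussianPi {d : ℕ} (a : EuclideanSpace ℝ (Fin d)) (σ : ℝ) :
    Measure (EuclideanSpace ℝ (Fin d)) :=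
  Measure.map (WithLp.toLp 2) (Measure.pi fun i => gaussianReal (a i) ((σ ^ 2).toNNReal))

open Classical in
/-- The Kullback–Leibler divergence `KL(μ‖ν) = ∫ log(dμ/dν) dμ` (valued in `ℝ≥0∞`),
defined when `μ ≪ ν` and the log-likelihood ratio is integrable, and `∞` otherwise. -/
noncomputable def klDiv {α : Type*} [MeasurableSpace α] (μ ν : Measure α) : ℝ≥0∞ :=
  if μ ≪ ν ∧ Integrable (llr μ ν) μ then ENNReal.ofReal (∫ x, llr μ ν x ∂μ) else ⊤

/-- For Gaussians `P u = N(δ u, σ²I)` with uniform mixture `P̄ = (1/n) ∑ v, P v`, the average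
KL divergence `(1/n) ∑ u, KL(P u ‖ P̄)` is at most `(1/σ²) (1/n) ∑ u, ‖δ u - δ̄‖²`, where
`δ̄ = (1/n) ∑ v, δ v`. -/
theorem avg_klDiv_gaussianPi_mixture_le (d n : ℕ) (hd : 1 ≤ d) (hn : 1 ≤ n) (σ : ℝ) (hσ : 0 < σ)
    (δ : Fin n → EuclideanSpace ℝ (Fin d))
    (δbar : EuclideanSpace ℝ (Fin d)) (hδbar : δbar = (n : ℝ)⁻¹ • ∑ v, δ v) :
    (n : ℝ≥0∞)⁻¹ * ∑ u, klDiv (gaussianPi (δ u) σ) ((n : ℝ≥0∞)⁻¹ • ∑ v, gaussianPi (δ v) σ) ≤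
      ENNReal.ofReal ((1 / σ ^ 2) * ((1 / n) * ∑ u, ‖δ u - δbar‖ ^ 2)) := by
  classical
  haveI : Nonempty (Fin n) := ⟨⟨0, hn⟩⟩
  have hn0 : (0:ℝ) < n := by exact_mod_cast hn
  have hσ2 : (0:ℝ) < σ ^ 2 := by positivity
  set V : ℝ≥0 := (σ ^ 2).toNNReal with hVdef
  have hV0 : V ≠ 0 := (Real.toNNReal_pos.mpr hσ2).ne'
  have hVσ : (V : ℝ) = σ ^ 2 := Real.coe_toNNReal _ hσ2.le
  have hVpos : (0:ℝ) < (V:ℝ) := by rw [hVσ]; exact hσ2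
  set Pbar : Measure (EuclideanSpace ℝ (Fin d)) :=
    (n : ℝ≥0∞)⁻¹ • ∑ v, gaussianPi (δ v) σ with hPbardef
  set Λ : Measure (EuclideanSpace ℝ (Fin d)) :=
    Measure.map (WithLp.toLp 2) (Measure.pi (fun _ : Fin d => (volume : Measure ℝ))) with hΛdef
  set f : Fin n → EuclideanSpace ℝ (Fin d) → ℝ :=
    fun v x => ∏ i, gaussianPDFReal (δ v i) V (x i) with hfdef
  set fbar : EuclideanSpace ℝ (Fin d) → ℝ := fun x => (n : ℝ)⁻¹ * ∑ v, f v x with hfbardef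
  have hfpos : ∀ v x, 0 < f v x := fun v x =>
    Finset.prod_pos fun i _ => gaussianPDFReal_pos _ _ _ hV0
  have hfmeas : ∀ v, Measurable (f v) := fun v =>
    Finset.measurable_prod _ fun i _ =>
      (measurable_gaussianPDFReal _ _).comp
        ((measurable_pi_apply i).comp (MeasurableEquiv.toLp 2 (Fin d → ℝ)).symm.measurable)
  have hfbarpos : ∀ x, 0 < fbar x := fun x => mul_pos (inv_pos.mpr hn0)
    (Finset.sum_pos (fun v _ => hfpos v x) Finset.univ_nonempty)
  have hfbarmeas : Measurable fbar :=
    (Finset.measurable_sum _ fun v _ => hfmeas v).const_mul _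
  have hgmeas : ∀ v, Measurable fun x => ENNReal.ofReal (f v x) := fun v =>
    (hfmeas v).ennreal_ofReal
  have hgbarmeas : Measurable fun x => ENNReal.ofReal (fbar x) := hfbarmeas.ennreal_ofReal
  haveI hprob : ∀ u : Fin n, IsProbabilityMeasure (gaussianPi (δ u) σ) := fun u => by
    unfold gaussianPi
    exact Measure.isProbabilityMeasure_map (MeasurableEquiv.toLp 2 (Fin d → ℝ)).measurable.aemeasurable
  haveI hPbarFin : IsFiniteMeasure Pbar := by
    constructor
    rw [hPbardef]
    simp only [Measure.smul_apply, Measure.coe_finset_sum, Finset.sum_apply, smul_eq_mul]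
    rw [Finset.sum_congr rfl fun v (_ : v ∈ Finset.univ) => measure_univ]
    rw [Finset.sum_const, Finset.card_univ, Fintype.card_fin, nsmul_eq_mul, mul_one]
    have hne : (n : ℝ≥0∞) ≠ 0 := by
      simp only [ne_eq, Nat.cast_eq_zero]
      omega
    rw [ENNReal.inv_mul_cancel hne (ENNReal.natCast_ne_top n)]
    exact ENNReal.one_lt_top
  -- density representation
  have hP : ∀ v, gaussianPi (δ v) σ = Λ.withDensity fun x => ENNReal.ofReal (f v x) := by
    intro v
    haveI h1 : ∀ i : Fin d,
        SigmaFinite ((volume : Measure ℝ).withDensity (gaussianPDF (δ v i) V)) := by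
      intro i; rw [← gaussianReal_of_var_ne_zero _ hV0]; infer_instance
    have h2 := KLAux.pi_withDensity (fun _ : Fin d => (volume : Measure ℝ))
      (fun i => gaussianPDF (δ v i) V) (fun i => measurable_gaussianPDF _ _)
    have h3 : gaussianPi (δ v) σ
        = Measure.map (WithLp.toLp 2)
            (Measure.pi fun i => (volume : Measure ℝ).withDensity (gaussianPDF (δ v i) V)) := by
      unfold gaussianPi
      congr 2
      funext i
      exact gaussianReal_of_var_ne_zero _ hV0
    rw [h3]
    rw [h2, KLAux.map_toLp_withDensity _ (fun x => ∏ i, gaussianPDF (δ v i) V (x i)) (Finset.measurable_prod _ fun i _ =>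
      (measurable_gaussianPDF _ _).comp (measurable_pi_apply i))]
    congr 1
    funext x
    exact (ENNReal.ofReal_prod_of_nonneg fun i _ => gaussianPDFReal_nonneg _ _ _).symm
  have hninv : (n : ℝ≥0∞)⁻¹ = ENNReal.ofReal (n : ℝ)⁻¹ := by
    rw [ENNReal.ofReal_inv_of_pos hn0, ENNReal.ofReal_natCast]
  have hPbar : Pbar = Λ.withDensity fun x => ENNReal.ofReal (fbar x) := by
    rw [hPbardef]
    rw [Finset.sum_congr rfl fun v _ => hP v]
    rw [KLAux.withDensity_finset_sum Λ Finset.univ _ hgmeas]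
    rw [← withDensity_smul _ (Finset.measurable_sum _ fun v _ => hgmeas v)]
    congr 1
    funext x
    simp only [Pi.smul_apply, smul_eq_mul, hfbardef]
    rw [← ENNReal.ofReal_sum_of_nonneg fun v _ => (hfpos v x).le, hninv,
      ← ENNReal.ofReal_mul (inv_nonneg.mpr hn0.le)]
  have hΛac : Λ ≪ Pbar := by
    rw [hPbar]
    exact withDensity_absolutelyContinuous' hgbarmeas.aemeasurable
      (Filter.Eventually.of_forall fun x => by
        simp only [ne_eq, ENNReal.ofReal_eq_zero, not_le]; exact hfbarpos x)
  have hac : ∀ u, gaussianPi (δ u) σ ≪ Pbar := fun u => by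
    rw [hP u]; exact (withDensity_absolutelyContinuous Λ _).trans hΛac
  have hΛeq : Pbar.withDensity (fun x => (ENNReal.ofReal (fbar x))⁻¹) = Λ := by
    rw [hPbar]
    exact withDensity_inv_same hgbarmeas
      (Filter.Eventually.of_forall fun x => by
        simp only [ne_eq, ENNReal.ofReal_eq_zero, not_le]; exact hfbarpos x)
      (Filter.Eventually.of_forall fun x => ENNReal.ofReal_ne_top)
  have hrn : ∀ u, (gaussianPi (δ u) σ).rnDeriv Pbar
      =ᵐ[Pbar] fun x => (ENNReal.ofReal (fbar x))⁻¹ * ENNReal.ofReal (f u x) := by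
    intro u
    have hPu2 : gaussianPi (δ u) σ = Pbar.withDensity
        ((fun x => (ENNReal.ofReal (fbar x))⁻¹) * fun x => ENNReal.ofReal (f u x)) := by
      rw [withDensity_mul Pbar (f := fun x => (ENNReal.ofReal (fbar x))⁻¹) hgbarmeas.inv (hgmeas u), hΛeq]
      exact hP u
    rw [hPu2]
    exact Measure.rnDeriv_withDensity Pbar (hgbarmeas.inv.mul (hgmeas u))
  have hllrPbar : ∀ u, llr (gaussianPi (δ u) σ) Pbar
      =ᵐ[Pbar] fun x => Real.log (f u x) - Real.log (fbar x) := by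
    intro u
    filter_upwards [hrn u] with x hx
    simp only [llr_def]
    rw [hx, ENNReal.toReal_mul, ENNReal.toReal_inv, ENNReal.toReal_ofReal (hfbarpos x).le,
      ENNReal.toReal_ofReal (hfpos u x).le]
    rw [Real.log_mul (inv_ne_zero (hfbarpos x).ne') (hfpos u x).ne', Real.log_inv]
    ring
  have hllrPu : ∀ u, llr (gaussianPi (δ u) σ) Pbar
      =ᵐ[gaussianPi (δ u) σ] fun x => Real.log (f u x) - Real.log (fbar x) :=
    fun u => (hac u).ae_le (hllrPbar u)
  -- explicit log-ratio
  set L : Fin n → Fin n → EuclideanSpace ℝ (Fin d) → ℝ :=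
    fun u v x => ∑ i, (δ u i - δ v i) * (2 * x i - δ u i - δ v i) / (2 * σ ^ 2) with hLdef
  have hLdiff : ∀ u v x, Real.log (f u x) - Real.log (f v x) = L u v x := by
    intro u v x
    simp only [hfdef, hLdef]
    rw [Real.log_prod fun i _ => (gaussianPDFReal_pos _ _ _ hV0).ne',
      Real.log_prod fun i _ => (gaussianPDFReal_pos _ _ _ hV0).ne',
      ← Finset.sum_sub_distrib]
    refine Finset.sum_congr rfl fun i _ => ?_
    simp only [gaussianPDFReal]
    have h2πV : (0:ℝ) < 2 * π * (V:ℝ) := by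
      have := Real.pi_pos; positivity
    have hC : (0:ℝ) < (√(2 * π * (V:ℝ)))⁻¹ := inv_pos.mpr (Real.sqrt_pos.mpr h2πV)
    rw [Real.log_mul hC.ne' (Real.exp_pos _).ne', Real.log_mul hC.ne' (Real.exp_pos _).ne',
      Real.log_exp, Real.log_exp, hVσ]
    field_simp
    ring
  have hIntCoord : ∀ u (i : Fin d),
      Integrable (fun x : EuclideanSpace ℝ (Fin d) => x i) (gaussianPi (δ u) σ) := by
    intro u i
    exact (integrable_map_equiv (MeasurableEquiv.toLp 2 (Fin d → ℝ))
      (fun x : EuclideanSpace ℝ (Fin d) => x i)).mpr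
      (KLAux.integrable_eval_pi (fun i => gaussianReal (δ u i) V) i
      (KLAux.integrable_id_gaussianReal _ hV0))
  have hIntegralCoord : ∀ u (i : Fin d),
      ∫ x : EuclideanSpace ℝ (Fin d), x i ∂gaussianPi (δ u) σ = δ u i := by
    intro u i
    have h := KLAux.integral_eval_pi (fun i => gaussianReal (δ u i) V) i
    rw [KLAux.integral_id_gaussianReal _ hV0] at h
    exact (integral_map_equiv (MeasurableEquiv.toLp 2 (Fin d → ℝ))
      (fun x : EuclideanSpace ℝ (Fin d) => x i)).trans h
  have hLintnd : ∀ u v (i : Fin d), Integrable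
      (fun x : EuclideanSpace ℝ (Fin d) =>
        (δ u i - δ v i) * (2 * x i - δ u i - δ v i) / (2 * σ ^ 2))
      (gaussianPi (δ u) σ) := by
    intro u v i
    exact (((((hIntCoord u i).const_mul 2).sub (integrable_const (δ u i))).sub
      (integrable_const (δ v i))).const_mul _).div_const _
  have hLint : ∀ u v, Integrable (L u v) (gaussianPi (δ u) σ) := by
    intro u v
    simp only [hLdef]
    exact integrable_finset_sum _ fun i _ => hLintnd u v i
  have hnormsq : ∀ a b : EuclideanSpace ℝ (Fin d), ‖a - b‖ ^ 2 = ∑ i, (a i - b i) ^ 2 := by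
    intro a b
    rw [EuclideanSpace.norm_eq, Real.sq_sqrt (Finset.sum_nonneg fun i _ => sq_nonneg _)]
    refine Finset.sum_congr rfl fun i _ => ?_
    rw [Real.norm_eq_abs, sq_abs]
    congr 1
  have hLintegral : ∀ u v, ∫ x, L u v x ∂gaussianPi (δ u) σ
      = ‖δ u - δ v‖ ^ 2 / (2 * σ ^ 2) := by
    intro u v
    simp only [hLdef]
    rw [integral_finset_sum _ fun i _ => hLintnd u v i]
    have hone : ∀ i : Fin d, ∫ x : EuclideanSpace ℝ (Fin d),
        (δ u i - δ v i) * (2 * x i - δ u i - δ v i) / (2 * σ ^ 2) ∂gaussianPi (δ u) σ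
        = (δ u i - δ v i) ^ 2 / (2 * σ ^ 2) := by
      intro i
      have hrepr : ∀ x : EuclideanSpace ℝ (Fin d),
          (δ u i - δ v i) * (2 * x i - δ u i - δ v i) / (2 * σ ^ 2)
            = (2 * (δ u i - δ v i) / (2 * σ ^ 2)) * x i
              + (δ u i - δ v i) * (-(δ u i) - δ v i) / (2 * σ ^ 2) := by
        intro x; ring
      simp_rw [hrepr]
      rw [integral_add ((hIntCoord u i).const_mul _) (integrable_const _),
        integral_const_mul, hIntegralCoord u i, integral_const]
      simp only [probReal_univ, smul_eq_mul, one_mul]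
      ring
    rw [Finset.sum_congr rfl fun i _ => hone i, ← Finset.sum_div, hnormsq]
  -- Jensen pointwise
  have hJensen : ∀ u x, Real.log (f u x) - Real.log (fbar x) ≤ (n:ℝ)⁻¹ * ∑ v, L u v x := by
    intro u x
    have hcon := (strictConcaveOn_log_Ioi.concaveOn).le_map_sum (t := Finset.univ)
      (w := fun _ : Fin n => (n:ℝ)⁻¹) (p := fun v => f v x)
      (fun _ _ => by positivity)
      (by rw [Finset.sum_const, Finset.card_univ, Fintype.card_fin, nsmul_eq_mul,
        mul_inv_cancel₀ hn0.ne'])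
      (fun v _ => hfpos v x)
    have h1 : (∑ v, (n:ℝ)⁻¹ • f v x) = fbar x := by
      simp only [smul_eq_mul, hfbardef]
      rw [Finset.mul_sum]
    rw [h1] at hcon
    simp only [smul_eq_mul] at hcon
    rw [← Finset.mul_sum] at hcon
    have h3 : (n:ℝ)⁻¹ * ∑ v, L u v x
        = Real.log (f u x) - (n:ℝ)⁻¹ * ∑ v, Real.log (f v x) := by
      have : ∀ v, L u v x = Real.log (f u x) - Real.log (f v x) := fun v => (hLdiff u v x).symm
      rw [Finset.sum_congr rfl fun v _ => this v, Finset.sum_sub_distrib, mul_sub,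
        Finset.sum_const, Finset.card_univ, Fintype.card_fin, nsmul_eq_mul, ← mul_assoc,
        inv_mul_cancel₀ hn0.ne', one_mul]
    linarith
  have habs : ∀ u x, |Real.log (f u x) - Real.log (fbar x)|
      ≤ Real.log n + ∑ v, |L u v x| := by
    intro u x
    have hlogn : (0:ℝ) ≤ Real.log n := Real.log_nonneg (by exact_mod_cast hn)
    have habssum : (0:ℝ) ≤ ∑ v, |L u v x| := Finset.sum_nonneg fun v _ => abs_nonneg _
    rw [abs_le]
    constructor
    · -- lower bound
      have hex : ∃ v, fbar x ≤ f v x := by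
        by_contra h
        push_neg at h
        have hlt := Finset.sum_lt_sum_of_nonempty Finset.univ_nonempty
          (fun v (_ : v ∈ Finset.univ) => h v)
        rw [Finset.sum_const, Finset.card_univ, Fintype.card_fin, nsmul_eq_mul] at hlt
        have h2 : (n:ℝ) * fbar x = ∑ v, f v x := by
          simp only [hfbardef]
          rw [← mul_assoc, mul_inv_cancel₀ hn0.ne', one_mul]
        rw [h2] at hlt
        exact lt_irrefl _ hlt
      obtain ⟨v₀, hv₀⟩ := hex
      have h1 : Real.log (fbar x) ≤ Real.log (f v₀ x) :=
        Real.log_le_log (hfbarpos x) hv₀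
      have h2 : L u v₀ x ≤ Real.log (f u x) - Real.log (fbar x) := by
        rw [← hLdiff u v₀ x]; linarith
      have h3 : -|L u v₀ x| ≤ L u v₀ x := neg_abs_le _
      have h4 : |L u v₀ x| ≤ ∑ v, |L u v x| :=
        Finset.single_le_sum (f := fun v => |L u v x|) (fun v _ => abs_nonneg _)
          (Finset.mem_univ v₀)
      linarith
    · -- upper bound
      have h1 := hJensen u x
      have h2 : (n:ℝ)⁻¹ * ∑ v, L u v x ≤ ∑ v, |L u v x| := by
        have h3 : ∑ v, L u v x ≤ ∑ v, |L u v x| :=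
          Finset.sum_le_sum fun v _ => le_abs_self _
        have h4 : (n:ℝ)⁻¹ ≤ 1 := by
          rw [inv_le_one_iff₀]; right; exact_mod_cast hn
        calc (n:ℝ)⁻¹ * ∑ v, L u v x ≤ (n:ℝ)⁻¹ * ∑ v, |L u v x| := by
              apply mul_le_mul_of_nonneg_left h3 (inv_nonneg.mpr hn0.le)
          _ ≤ 1 * ∑ v, |L u v x| := mul_le_mul_of_nonneg_right h4 habssum
          _ = ∑ v, |L u v x| := one_mul _
      linarith
  have hllrInt : ∀ u, Integrable (llr (gaussianPi (δ u) σ) Pbar) (gaussianPi (δ u) σ) := by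
    intro u
    have hB : Integrable (fun x => Real.log n + ∑ v, |L u v x|) (gaussianPi (δ u) σ) :=
      (integrable_const _).add (integrable_finset_sum _ fun v _ => (hLint u v).abs)
    refine Integrable.mono' hB (measurable_llr _ _).aestronglyMeasurable ?_
    filter_upwards [hllrPu u] with x hx
    rw [hx, Real.norm_eq_abs]
    exact habs u x
  have hIntBound : ∀ u, ∫ x, llr (gaussianPi (δ u) σ) Pbar x ∂gaussianPi (δ u) σ
      ≤ (n:ℝ)⁻¹ * ∑ v, ‖δ u - δ v‖ ^ 2 / (2 * σ ^ 2) := by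
    intro u
    rw [integral_congr_ae (hllrPu u)]
    have hInt1 : Integrable (fun x => Real.log (f u x) - Real.log (fbar x))
        (gaussianPi (δ u) σ) := (hllrInt u).congr (hllrPu u)
    have hInt2 : Integrable (fun x => (n:ℝ)⁻¹ * ∑ v, L u v x) (gaussianPi (δ u) σ) :=
      (integrable_finset_sum _ fun v _ => hLint u v).const_mul _
    calc ∫ x, (Real.log (f u x) - Real.log (fbar x)) ∂gaussianPi (δ u) σ
        ≤ ∫ x, (n:ℝ)⁻¹ * ∑ v, L u v x ∂gaussianPi (δ u) σ :=
          integral_mono_ae hInt1 hInt2 (Filter.Eventually.of_forall fun x => hJensen u x)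
      _ = (n:ℝ)⁻¹ * ∑ v, ‖δ u - δ v‖ ^ 2 / (2 * σ ^ 2) := by
          rw [integral_const_mul, integral_finset_sum _ fun v _ => hLint u v]
          rw [Finset.sum_congr rfl fun v _ => hLintegral u v]
  have hkl : ∀ u, klDiv (gaussianPi (δ u) σ) Pbar
      ≤ ENNReal.ofReal ((n:ℝ)⁻¹ * ∑ v, ‖δ u - δ v‖ ^ 2 / (2 * σ ^ 2)) := by
    intro u
    unfold klDiv
    rw [if_pos ⟨hac u, hllrInt u⟩]
    exact ENNReal.ofReal_le_ofReal (hIntBound u)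
  have hKnonneg : ∀ u, (0:ℝ) ≤ (n:ℝ)⁻¹ * ∑ v, ‖δ u - δ v‖ ^ 2 / (2 * σ ^ 2) := by
    intro u
    apply mul_nonneg (inv_nonneg.mpr hn0.le)
    exact Finset.sum_nonneg fun v _ => div_nonneg (sq_nonneg _) (by positivity)
  -- the key real identity
  have hzero : ∑ u, (δ u - δbar) = (0 : EuclideanSpace ℝ (Fin d)) := by
    rw [Finset.sum_sub_distrib, hδbar, Finset.sum_const, Finset.card_univ, Fintype.card_fin]
    rw [← Nat.cast_smul_eq_nsmul ℝ, smul_smul, mul_inv_cancel₀ hn0.ne', one_smul, sub_self]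
  have hident : ∑ u, ∑ v, ‖δ u - δ v‖ ^ 2 = 2 * n * ∑ u, ‖δ u - δbar‖ ^ 2 := by
    have hterm : ∀ u v : Fin n, ‖δ u - δ v‖ ^ 2
        = ‖δ u - δbar‖ ^ 2 - 2 * (inner ℝ (δ u - δbar) (δ v - δbar) : ℝ) + ‖δ v - δbar‖ ^ 2 := by
      intro u v
      rw [← sub_sub_sub_cancel_right (δ u) (δ v) δbar]
      exact norm_sub_sq_real _ _
    have h1 : ∀ u : Fin n, ∑ v, (‖δ u - δbar‖ ^ 2
        - 2 * (inner ℝ (δ u - δbar) (δ v - δbar) : ℝ) + ‖δ v - δbar‖ ^ 2)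
        = (n:ℝ) * ‖δ u - δbar‖ ^ 2 + ∑ v, ‖δ v - δbar‖ ^ 2 := by
      intro u
      rw [Finset.sum_add_distrib, Finset.sum_sub_distrib, Finset.sum_const, Finset.card_univ,
        Fintype.card_fin, nsmul_eq_mul, ← Finset.mul_sum, ← inner_sum, hzero,
        inner_zero_right, mul_zero, sub_zero]
    rw [Finset.sum_congr rfl fun u _ => by rw [Finset.sum_congr rfl fun v _ => hterm u v, h1 u]]
    rw [Finset.sum_add_distrib, ← Finset.mul_sum, Finset.sum_const, Finset.card_univ,
      Fintype.card_fin, nsmul_eq_mul]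
    ring
  have hkey : (n:ℝ)⁻¹ * ∑ u, (n:ℝ)⁻¹ * ∑ v, ‖δ u - δ v‖ ^ 2 / (2 * σ ^ 2)
      = (1 / σ ^ 2) * ((1 / n) * ∑ u, ‖δ u - δbar‖ ^ 2) := by
    have h1 : ∀ u : Fin n, (n:ℝ)⁻¹ * ∑ v, ‖δ u - δ v‖ ^ 2 / (2 * σ ^ 2)
        = ((n:ℝ)⁻¹ / (2 * σ ^ 2)) * ∑ v, ‖δ u - δ v‖ ^ 2 := by
      intro u
      rw [← Finset.sum_div]
      ring
    rw [Finset.sum_congr rfl fun u _ => h1 u, ← Finset.mul_sum, hident]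
    field_simp
  calc (n : ℝ≥0∞)⁻¹ * ∑ u, klDiv (gaussianPi (δ u) σ) Pbar
      ≤ (n:ℝ≥0∞)⁻¹ * ∑ u, ENNReal.ofReal ((n:ℝ)⁻¹ * ∑ v, ‖δ u - δ v‖ ^ 2 / (2 * σ ^ 2)) :=
        mul_le_mul_right (Finset.sum_le_sum fun u _ => hkl u) _
    _ = ENNReal.ofReal ((n:ℝ)⁻¹ * ∑ u, (n:ℝ)⁻¹ * ∑ v, ‖δ u - δ v‖ ^ 2 / (2 * σ ^ 2)) := by
        rw [← ENNReal.ofReal_sum_of_nonneg fun u _ => hKnonneg u, hninv,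
          ← ENNReal.ofReal_mul (inv_nonneg.mpr hn0.le)]
    _ ≤ ENNReal.ofReal ((1 / σ ^ 2) * ((1 / n) * ∑ u, ‖δ u - δbar‖ ^ 2)) :=
        ENNReal.ofReal_le_ofReal (le_of_eq hkey)
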